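/- Let E₁ and E₂ be Banach spaces over 𝕜, let 𝒜₁ ⊆ B(E₁) and 𝒜₂ ⊆ B(E₂) be standard subalgebras, and let T : 𝒜₁ → 𝒜₂ be a biseparating linear bijection. Suppose S : E₁ → E₂ and Ψ : E₁* → E₂* are (plain) linear bijections satisfying T(e ⊗ e*) = S(e) ⊗ Ψ(e*) for all e ∈ E₁ and e* ∈ E₁*. Then S is continuous. -/

import Mathlib

set_option synthInstance.maxHeartbeats 400000
set_option maxHeartbeats 1000000

/-- A subalgebra of `B(E)` is *standard* if it contains every continuous finite-rank
operator (it contains the identity automatically, being a subalgebra). -/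
def IsStandardSubalgebra (𝕜 : Type*) [RCLike 𝕜] {E : Type*} [NormedAddCommGroup E]
    [NormedSpace 𝕜 E] (𝒜 : Subalgebra 𝕜 (E →L[𝕜] E)) : Prop :=
  ∀ A : E →L[𝕜] E, FiniteDimensional 𝕜 (LinearMap.range (A : E →ₗ[𝕜] E)) → A ∈ 𝒜

/-- The rank-one operator `e ⊗ e*` sending `e'` to `e*(e') • e`. -/
noncomputable def rankOne {𝕜 : Type*} [RCLike 𝕜] {E : Type*} [NormedAddCommGroup E]
    [NormedSpace 𝕜 E] (e : E) (f : E →L[𝕜] 𝕜) : E →L[𝕜] E :=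
  f.smulRight e

section aux
variable {𝕜 : Type*} [RCLike 𝕜] {E : Type*} [NormedAddCommGroup E] [NormedSpace 𝕜 E]

lemma rankOne_fd (e : E) (f : E →L[𝕜] 𝕜) :
    FiniteDimensional 𝕜 (LinearMap.range ((rankOne e f : E →L[𝕜] E) : E →ₗ[𝕜] E)) := by
  have hle : LinearMap.range ((rankOne e f : E →L[𝕜] E) : E →ₗ[𝕜] E) ≤ 𝕜 ∙ e := by
    rintro x ⟨y, rfl⟩
    exact Submodule.smul_mem _ _ (Submodule.mem_span_singleton_self e)
  exact Submodule.finiteDimensional_of_le hle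

lemma rankOne_mul (e e' : E) (f f' : E →L[𝕜] 𝕜) :
    (rankOne e f : E →L[𝕜] E) * rankOne e' f' = f e' • rankOne e f' := by
  ext x
  simp [rankOne, ContinuousLinearMap.mul_apply, smul_smul, mul_comm]

lemma rankOne_ne_zero {e : E} {f : E →L[𝕜] 𝕜} (he : e ≠ 0) (hf : f ≠ 0) :
    (rankOne e f : E →L[𝕜] E) ≠ 0 := by
  obtain ⟨x, hx⟩ : ∃ x, f x ≠ 0 := by
    by_contra h
    push_neg at h
    exact hf (ContinuousLinearMap.ext fun x => by simp [h x])
  intro h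
  have h2 : (rankOne e f : E →L[𝕜] E) x = 0 := by rw [h]; rfl
  simp only [rankOne, ContinuousLinearMap.smulRight_apply, smul_eq_zero] at h2
  exact h2.elim hx he

end aux

theorem continuity_of_S_of_biseparating
    {𝕜 : Type*} [RCLike 𝕜]
    {E₁ E₂ : Type*} [NormedAddCommGroup E₁] [NormedSpace 𝕜 E₁] [CompleteSpace E₁]
    [NormedAddCommGroup E₂] [NormedSpace 𝕜 E₂] [CompleteSpace E₂]
    (𝒜₁ : Subalgebra 𝕜 (E₁ →L[𝕜] E₁)) (𝒜₂ : Subalgebra 𝕜 (E₂ →L[𝕜] E₂))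
    (h𝒜₁ : IsStandardSubalgebra 𝕜 𝒜₁) (h𝒜₂ : IsStandardSubalgebra 𝕜 𝒜₂)
    (T : 𝒜₁ →ₗ[𝕜] 𝒜₂) (hbij : Function.Bijective T)
    (hsep : ∀ a b : 𝒜₁, a * b = 0 → T a * T b = 0)
    (hsep' : ∀ a b : 𝒜₁, T a * T b = 0 → a * b = 0)
    (S : E₁ →ₗ[𝕜] E₂) (Ψ : (E₁ →L[𝕜] 𝕜) →ₗ[𝕜] (E₂ →L[𝕜] 𝕜))
    (hS : Function.Bijective S) (hΨ : Function.Bijective Ψ)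
    (hrep : ∀ (e : E₁) (f : E₁ →L[𝕜] 𝕜) (h : rankOne e f ∈ 𝒜₁),
      ((T ⟨rankOne e f, h⟩ : E₂ →L[𝕜] E₂)) = rankOne (S e) (Ψ f)) :
    Continuous S := by
  -- Key: for each f, (Ψ f)(S e) = 0 ↔ f e = 0.
  have key : ∀ (e : E₁) (f : E₁ →L[𝕜] 𝕜), Ψ f (S e) = 0 ↔ f e = 0 := by
    intro e f
    by_cases he : e = 0
    · simp [he]
    by_cases hf : f = 0
    · simp [hf]
    have hmem : rankOne e f ∈ 𝒜₁ := h𝒜₁ _ (rankOne_fd e f)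
    set a : 𝒜₁ := ⟨rankOne e f, hmem⟩ with ha
    have hTa : (T a : E₂ →L[𝕜] E₂) = rankOne (S e) (Ψ f) := hrep e f hmem
    have hSe : S e ≠ 0 := fun h0 => he (hS.1 (by rw [h0, map_zero]))
    have hΨf : Ψ f ≠ 0 := fun h0 => hf (hΨ.1 (by rw [h0, map_zero]))
    constructor
    · intro hz
      have hTT : T a * T a = 0 := by
        have : ((T a * T a : 𝒜₂) : E₂ →L[𝕜] E₂) = 0 := by
          push_cast [hTa, rankOne_mul, hz]
          simp
        exact Subtype.ext this
      have haa : a * a = 0 := hsep' a a hTT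
      have : ((a * a : 𝒜₁) : E₁ →L[𝕜] E₁) = 0 := by rw [haa]; rfl
      rw [show ((a * a : 𝒜₁) : E₁ →L[𝕜] E₁) = (rankOne e f : E₁ →L[𝕜] E₁) * rankOne e f from rfl,
        rankOne_mul] at this
      rcases smul_eq_zero.1 this with h | h
      · exact h
      · exact absurd h (rankOne_ne_zero he hf)
    · intro hz
      have haa : a * a = 0 := by
        apply Subtype.ext
        show (rankOne e f : E₁ →L[𝕜] E₁) * rankOne e f = 0
        rw [rankOne_mul, hz, zero_smul]
      have hTT := hsep a a haa
      have : ((T a * T a : 𝒜₂) : E₂ →L[𝕜] E₂) = 0 := by rw [hTT]; rfl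
      rw [show ((T a * T a : 𝒜₂) : E₂ →L[𝕜] E₂) = (T a : E₂ →L[𝕜] E₂) * (T a : E₂ →L[𝕜] E₂)
        from rfl, hTa, rankOne_mul] at this
      rcases smul_eq_zero.1 this with h | h
      · exact h
      · exact absurd h (rankOne_ne_zero hSe hΨf)
  -- hence each e ↦ Ψ f (S e) is continuous (closed kernel)
  have cont : ∀ f : E₁ →L[𝕜] 𝕜, Continuous fun e => Ψ f (S e) := by
    intro f
    have : Continuous ((Ψ f : E₂ →ₗ[𝕜] 𝕜).comp S) := by
      apply LinearMap.continuous_of_isClosed_ker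
      have hker : (LinearMap.ker ((Ψ f : E₂ →ₗ[𝕜] 𝕜).comp S) : Set E₁)
          = (LinearMap.ker (f : E₁ →ₗ[𝕜] 𝕜) : Set E₁) := by
        ext e
        simp only [SetLike.mem_coe, LinearMap.mem_ker, LinearMap.comp_apply,
          ContinuousLinearMap.coe_coe]
        exact key e f
      rw [hker]
      exact ContinuousLinearMap.isClosed_ker f
    exact this
  -- closed graph
  apply S.continuous_of_isClosed_graph
  have hgr : (S.graph : Set (E₁ × E₂)) =
      ⋂ f : E₁ →L[𝕜] 𝕜, {p : E₁ × E₂ | Ψ f p.2 = Ψ f (S p.1)} := by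
    ext p
    simp only [Set.mem_iInter, Set.mem_setOf_eq, SetLike.mem_coe, LinearMap.mem_graph_iff]
    constructor
    · rintro h f; rw [h]
    · intro h
      have : ∀ g : StrongDual 𝕜 E₂, g p.2 = g (S p.1) := by
        intro g
        obtain ⟨f, rfl⟩ := hΨ.2 g
        exact h f
      exact (NormedSpace.eq_iff_forall_dual_eq 𝕜).2 this
  rw [hgr]
  refine isClosed_iInter fun f => ?_
  exact isClosed_eq ((Ψ f).continuous.comp continuous_snd) ((cont f).comp continuous_fst)
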